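/- Let n = 2m and f : 𝔽₂ⁿ → ℤ_{2^k} be gbent and regular, meaning H_f(u) = 2^m ζ^{f*(u)} for some function f* : 𝔽₂ⁿ → ℤ_{2^k} and all u. For u ∈ 𝔽₂ⁿ define f_u(x) = f(x) + 2^{k−1}(u·x) and b_j^{(u)} = #{x : f_u(x) = j} for 0 ≤ j ≤ 2^k − 1. Then for each u there exists ρ_u with 0 ≤ ρ_u ≤ 2^{k−1} − 1 such that b^{(u)}_{2^{k−1}+ρ_u} = b^{(u)}_{ρ_u} ± 2^m, and b^{(u)}_{2^{k−1}+j} = b^{(u)}_{j} for all 0 ≤ j ≤ 2^{k−1}−1 with j ≠ ρ_u. -/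

import Mathlib

open Finset Complex

/-- Standard inner product on `𝔽₂ⁿ`. -/
def ip {n : ℕ} (u x : Fin n → ZMod 2) : ZMod 2 := ∑ i, u i * x i

/-- Walsh–Hadamard transform of a Boolean function. -/
noncomputable def WHT {n : ℕ} (g : (Fin n → ZMod 2) → ZMod 2) (u : Fin n → ZMod 2) : ℂ :=
  ∑ x : Fin n → ZMod 2, (-1 : ℂ) ^ ((g x + ip u x).val)

/-- Generalized Walsh–Hadamard transform of `f : 𝔽₂ⁿ → ℤ_q`. -/
noncomputable def GWT {n : ℕ} (q : ℕ) [NeZero q] (f : (Fin n → ZMod 2) → ZMod q)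
    (u : Fin n → ZMod 2) : ℂ :=
  ∑ x : Fin n → ZMod 2,
    Complex.exp (2 * Real.pi * Complex.I * ((f x).val : ℂ) / (q : ℂ)) *
      (-1 : ℂ) ^ ((ip u x).val)

lemma lin_indep (k : ℕ) (hk : 1 ≤ k) (a : ℕ → ℚ)
    (h : ∑ j ∈ Finset.range (2 ^ (k - 1)), (a j : ℂ) *
        Complex.exp (2 * Real.pi * Complex.I / (2 ^ k : ℂ)) ^ j = 0) :
    ∀ j < 2 ^ (k - 1), a j = 0 := by
  set ζ : ℂ := Complex.exp (2 * Real.pi * Complex.I / (2 ^ k : ℂ)) with hζdef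
  have hprim : IsPrimitiveRoot ζ (2 ^ k) := by
    have := Complex.isPrimitiveRoot_exp (2 ^ k) (by positivity)
    simpa [hζdef] using this
  have hmin : Polynomial.cyclotomic (2 ^ k) ℚ = minpoly ℚ ζ :=
    Polynomial.cyclotomic_eq_minpoly_rat hprim (by positivity)
  have hdeg : (minpoly ℚ ζ).natDegree = 2 ^ (k - 1) := by
    rw [← hmin, Polynomial.natDegree_cyclotomic, Nat.totient_prime_pow Nat.prime_two hk]
    simp
  set p : Polynomial ℚ := ∑ j ∈ Finset.range (2 ^ (k - 1)), Polynomial.monomial j (a j) with hp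
  have hcoeff : ∀ j < 2 ^ (k - 1), p.coeff j = a j := by
    intro j hj
    rw [hp, Polynomial.finset_sum_coeff]
    rw [Finset.sum_eq_single j]
    · simp
    · intro b _ hb; simp [Polynomial.coeff_monomial, hb]
    · intro hj'; exact absurd (Finset.mem_range.2 hj) hj'
  have heval : Polynomial.aeval ζ p = 0 := by
    rw [hp, map_sum]
    simpa [Polynomial.aeval_monomial, eq_ratCast] using h
  have hp0 : p = 0 := by
    by_contra hne
    have hdvd : minpoly ℚ ζ ∣ p := minpoly.dvd ℚ ζ heval
    have h1 : (minpoly ℚ ζ).natDegree ≤ p.natDegree :=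
      Polynomial.natDegree_le_of_dvd hdvd hne
    have h2 : p.natDegree < 2 ^ (k - 1) := by
      have hb : p.natDegree ≤ 2 ^ (k - 1) - 1 := by
        rw [hp]
        apply Polynomial.natDegree_sum_le_of_forall_le
        intro j hj
        exact le_trans (Polynomial.natDegree_monomial_le _)
          (by have := Finset.mem_range.1 hj; omega)
      have : 0 < 2 ^ (k - 1) := by positivity
      omega
    omega
  intro j hj
  rw [← hcoeff j hj, hp0, Polynomial.coeff_zero]

theorem value_distribution_of_regular_gbent (m k : ℕ) (hk : 1 ≤ k)
    (f f' : (Fin (2 * m) → ZMod 2) → ZMod (2 ^ k))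
    (hreg : ∀ u, GWT (2 ^ k) f u =
      (2 ^ m : ℂ) * Complex.exp (2 * Real.pi * Complex.I / (2 ^ k : ℂ)) ^ (f' u).val) :
    ∀ u : Fin (2 * m) → ZMod 2,
      ∃ ρ : ℕ, ρ ≤ 2 ^ (k - 1) - 1 ∧
        ((fun b : ℕ → ℤ =>
          (b (2 ^ (k - 1) + ρ) = b ρ + 2 ^ m ∨ b (2 ^ (k - 1) + ρ) = b ρ - 2 ^ m) ∧
          ∀ j : ℕ, j ≤ 2 ^ (k - 1) - 1 → j ≠ ρ → b (2 ^ (k - 1) + j) = b j)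
         (fun j => ((Finset.univ.filter
            (fun x : Fin (2 * m) → ZMod 2 =>
              f x + ((2 ^ (k - 1) * (ip u x).val : ℕ) : ZMod (2 ^ k)) = (j : ZMod (2 ^ k)))).card : ℤ))) := by
  intro u
  have hk1 : (0:ℕ) < 2 ^ (k - 1) := by positivity
  have hq2 : 2 ^ k = 2 ^ (k - 1) + 2 ^ (k - 1) := by
    have : 2 ^ k = 2 ^ (k - 1) * 2 := by
      rw [← pow_succ]; congr 1; omega
    omega
  haveI : NeZero (2 ^ k) := ⟨by positivity⟩
  set ζ : ℂ := Complex.exp (2 * Real.pi * Complex.I / (2 ^ k : ℂ)) with hζdef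
  have hq0 : ((2:ℂ) ^ k) ≠ 0 := pow_ne_zero _ two_ne_zero
  have hcast : ((2 ^ k : ℕ) : ℂ) = (2:ℂ) ^ k := by push_cast; ring
  have hζq : ζ ^ (2 ^ k) = 1 := by
    rw [hζdef, ← Complex.exp_nat_mul, hcast,
      show (2:ℂ) ^ k * (2 * Real.pi * Complex.I / (2:ℂ) ^ k) = 2 * Real.pi * Complex.I from by
        field_simp]
    exact Complex.exp_two_pi_mul_I
  have hζh : ζ ^ (2 ^ (k - 1)) = -1 := by
    rw [hζdef, ← Complex.exp_nat_mul,
      show ((2 ^ (k-1) : ℕ) : ℂ) * (2 * Real.pi * Complex.I / (2:ℂ) ^ k) =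
        Real.pi * Complex.I from by
        have h2 : (2:ℂ) ^ k = 2 * ((2 ^ (k-1) : ℕ) : ℂ) := by
          push_cast
          rw [show (2:ℂ) * 2 ^ (k-1) = 2 ^ (k - 1 + 1) from by ring]
          congr 1; omega
        have hh0 : ((2 ^ (k-1) : ℕ) : ℂ) ≠ 0 := by
          rw [Nat.cast_ne_zero]; omega
        rw [h2]
        field_simp]
    exact Complex.exp_pi_mul_I
  have hζmod : ∀ A : ℕ, ζ ^ A = ζ ^ (A % 2 ^ k) := by
    intro A
    conv_lhs => rw [show A = 2 ^ k * (A / 2 ^ k) + A % 2 ^ k from (Nat.div_add_mod A _).symm]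
    rw [pow_add, pow_mul, hζq, one_pow, one_mul]
  set g : (Fin (2 * m) → ZMod 2) → ℕ :=
    fun x => (f x + ((2 ^ (k - 1) * (ip u x).val : ℕ) : ZMod (2 ^ k))).val with hg
  have hgq : ∀ x, g x < 2 ^ k := fun x => ZMod.val_lt _
  set N : ℕ → ℕ := fun j => (Finset.univ.filter
      (fun x : Fin (2 * m) → ZMod 2 =>
        f x + ((2 ^ (k - 1) * (ip u x).val : ℕ) : ZMod (2 ^ k)) = (j : ZMod (2 ^ k)))).card
    with hN
  have hNg : ∀ j < 2 ^ k, N j = (Finset.univ.filter (fun x => g x = j)).card := by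
    intro j hj
    rw [hN]
    apply congrArg Finset.card
    apply Finset.filter_congr
    intro x _
    simp only [hg]
    constructor
    · intro hh; rw [hh, ZMod.val_cast_of_lt hj]
    · intro hh
      rw [← hh]
      simp [ZMod.natCast_val, ZMod.cast_id]
  set ρ' : ℕ := (f' u).val with hρ'def
  have hρ'q : ρ' < 2 ^ k := ZMod.val_lt _
  have E1 : ∑ j ∈ Finset.range (2 ^ k), (N j : ℂ) * ζ ^ j = 2 ^ m * ζ ^ ρ' := by
    rw [← hreg u]
    have step : GWT (2 ^ k) f u = ∑ x : Fin (2 * m) → ZMod 2, ζ ^ (g x) := by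
      unfold GWT
      apply Finset.sum_congr rfl
      intro x _
      have e1 : Complex.exp (2 * Real.pi * Complex.I * ((f x).val : ℂ) / ((2^k : ℕ) : ℂ))
          = ζ ^ (f x).val := by
        rw [hζdef, ← Complex.exp_nat_mul]
        congr 1
        rw [hcast]
        field_simp
      have e2 : ((-1 : ℂ)) ^ ((ip u x).val) = ζ ^ (2 ^ (k-1) * (ip u x).val) := by
        rw [pow_mul, hζh]
      rw [e1, e2, ← pow_add]
      rw [hζmod ((f x).val + 2 ^ (k-1) * (ip u x).val), hζmod (g x)]
      congr 1
      simp only [hg]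
      rw [ZMod.val_add, ZMod.val_natCast]
      simp [Nat.add_mod]
    rw [step]
    rw [← Finset.sum_fiberwise_of_maps_to
      (fun x (_ : x ∈ Finset.univ) => Finset.mem_range.2 (hgq x)) (fun x => ζ ^ g x)]
    refine Finset.sum_congr rfl fun j hj => ?_
    rw [hNg j (Finset.mem_range.1 hj)]
    rw [Finset.sum_congr rfl (fun x hx => by
      rw [(Finset.mem_filter.1 hx).2] : ∀ x ∈ Finset.filter (fun x => g x = j) Finset.univ,
        ζ ^ g x = ζ ^ j)]
    rw [Finset.sum_const, nsmul_eq_mul]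
  set c : ℕ → ℤ := fun j => (N j : ℤ) - (if j = ρ' then 2 ^ m else 0) with hc
  have hcval : ∀ j, c j = (N j : ℤ) - (if j = ρ' then 2 ^ m else 0) := fun j => by rw [hc]
  have E2 : ∑ j ∈ Finset.range (2 ^ k), (c j : ℂ) * ζ ^ j = 0 := by
    have hsub : ∑ j ∈ Finset.range (2 ^ k), ((if j = ρ' then (2:ℂ) ^ m else 0) * ζ ^ j)
        = 2 ^ m * ζ ^ ρ' := by
      rw [Finset.sum_congr rfl (fun j _ => by rw [ite_mul, zero_mul] :
        ∀ j ∈ Finset.range (2 ^ k), (if j = ρ' then (2:ℂ) ^ m else 0) * ζ ^ j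
          = if j = ρ' then (2:ℂ) ^ m * ζ ^ j else 0)]
      rw [Finset.sum_ite_eq' (Finset.range (2 ^ k)) ρ' (fun j => (2:ℂ) ^ m * ζ ^ j)]
      simp [Finset.mem_range.2 hρ'q]
    have expand : ∀ j ∈ Finset.range (2 ^ k), (c j : ℂ) * ζ ^ j
        = (N j : ℂ) * ζ ^ j - (if j = ρ' then (2:ℂ) ^ m else 0) * ζ ^ j := by
      intro j _
      rw [hcval j]
      push_cast
      split_ifs <;> ring
    rw [Finset.sum_congr rfl expand, Finset.sum_sub_distrib, E1, hsub, sub_self]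
  have E3 : ∑ j ∈ Finset.range (2 ^ (k - 1)),
      (((c j - c (2 ^ (k - 1) + j) : ℤ) : ℚ) : ℂ) * ζ ^ j = 0 := by
    rw [hq2, Finset.sum_range_add] at E2
    have hsecond : ∑ x ∈ Finset.range (2 ^ (k - 1)),
        (c (2 ^ (k - 1) + x) : ℂ) * ζ ^ (2 ^ (k - 1) + x)
        = -∑ x ∈ Finset.range (2 ^ (k - 1)), (c (2 ^ (k - 1) + x) : ℂ) * ζ ^ x := by
      rw [← Finset.sum_neg_distrib]
      refine Finset.sum_congr rfl fun x _ => ?_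
      rw [pow_add, hζh]
      ring
    rw [hsecond] at E2
    have : ∀ j ∈ Finset.range (2 ^ (k - 1)),
        (((c j - c (2 ^ (k - 1) + j) : ℤ) : ℚ) : ℂ) * ζ ^ j
        = (c j : ℂ) * ζ ^ j - (c (2 ^ (k - 1) + j) : ℂ) * ζ ^ j := by
      intro j _
      push_cast
      ring
    rw [Finset.sum_congr rfl this, Finset.sum_sub_distrib]
    rw [← sub_neg_eq_add] at E2
    linear_combination E2
  have key : ∀ j < 2 ^ (k - 1), c j = c (2 ^ (k - 1) + j) := by
    intro j hj
    have h0 := lin_indep k hk (fun j => ((c j - c (2 ^ (k - 1) + j) : ℤ) : ℚ)) E3 j hj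
    have h0' : ((c j - c (2 ^ (k - 1) + j) : ℤ) : ℚ) = 0 := h0
    have h1 : (c j - c (2 ^ (k - 1) + j) : ℤ) = 0 := by exact_mod_cast h0'
    omega
  set ρ : ℕ := ρ' % 2 ^ (k - 1) with hρ
  have hρlt : ρ < 2 ^ (k - 1) := Nat.mod_lt _ hk1
  refine ⟨ρ, by omega, ?_, ?_⟩
  · show ((N (2 ^ (k - 1) + ρ) : ℤ) = (N ρ : ℤ) + 2 ^ m ∨
      (N (2 ^ (k - 1) + ρ) : ℤ) = (N ρ : ℤ) - 2 ^ m)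
    by_cases hlt : ρ' < 2 ^ (k - 1)
    · have hρeq : ρ = ρ' := by rw [hρ, Nat.mod_eq_of_lt hlt]
      have hkey := key ρ hρlt
      rw [hcval ρ, hcval (2 ^ (k - 1) + ρ)] at hkey
      rw [if_pos (by omega), if_neg (by omega)] at hkey
      right
      omega
    · have hle : 2 ^ (k - 1) ≤ ρ' := not_lt.1 hlt
      have hρeq : ρ = ρ' - 2 ^ (k - 1) := by
        rw [hρ, Nat.mod_eq_sub_mod hle, Nat.mod_eq_of_lt (by omega)]
      have hkey := key ρ hρlt
      rw [hcval ρ, hcval (2 ^ (k - 1) + ρ)] at hkey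
      rw [if_neg (by omega), if_pos (by omega)] at hkey
      left
      omega
  · show ∀ j : ℕ, j ≤ 2 ^ (k - 1) - 1 → j ≠ ρ → (N (2 ^ (k - 1) + j) : ℤ) = (N j : ℤ)
    intro j hjle hjρ
    have hjlt : j < 2 ^ (k - 1) := by omega
    have hkey := key j hjlt
    rw [hcval j, hcval (2 ^ (k - 1) + j)] at hkey
    have hjρ' : j ≠ ρ' := by
      intro hh
      apply hjρ
      rw [hρ, ← hh, Nat.mod_eq_of_lt hjlt]
    have hjρ'2 : 2 ^ (k - 1) + j ≠ ρ' := by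
      intro hh
      apply hjρ
      rw [hρ, ← hh, Nat.add_comm, Nat.add_mod_right, Nat.mod_eq_of_lt hjlt]
    rw [if_neg hjρ', if_neg hjρ'2] at hkey
    omega
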